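/- arXiv:1709.05155 — 3 statements merged into one kernel-verified Lean document; each statement's English description precedes it below -/
import Mathlib

section
/- Suppose z(s,t) = βs + z̄(s,t) with z̄ ∈ C([0,T]; C^{1,α}(ℝ)) for some 0 < α < 1, β ∈ ℝ and T < ∞, and let c > 0. Then for each t ∈ [0,T] the weights Φ_±(·,·,t) belong to 𝒲⁰, and sup_{t∈[0,T]} ⦀Φ_±(·,·,t)⦀₀ < ∞. -/
noncomputable section

open Real MeasureTheory Filter Topology Set
open scoped ENNReal

/-- Symmetric principal value integral over `ℝ` (limit of `∫_{-R}^R` as `R → ∞`). -/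
def pvIntegral (g : ℝ → ℝ) : ℝ :=
  limUnder atTop fun R : ℝ => ∫ ξ in (-R)..R, g ξ

/-- The weighted singular integral operator `T_Φ`. -/
def TPhi (Φ : ℝ → ℝ → ℝ) (f : ℝ → ℝ) (s : ℝ) : ℝ :=
  (1 / (2 * π)) * pvIntegral fun ξ => (deriv f (s - ξ) - deriv f s) / ξ * Φ ξ s

/-- The weighted Hölder seminorm `[f]*_α`. -/
def starSemi (α : ℝ) (f : ℝ → ℝ) : ℝ≥0∞ :=
  ⨆ (s : ℝ) (ξ : {ξ : ℝ // |ξ| ≤ 1}),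
    ENNReal.ofReal ((1 + |s| ^ (1 + α)) * |f (s - ξ.1) - f s| / |ξ.1| ^ α)

/-- The weighted norm `‖f‖*_{k,α}`. -/
def starNorm (k : ℕ) (α : ℝ) (f : ℝ → ℝ) : ℝ≥0∞ :=
  (⨆ (s : ℝ) (j : Fin (k + 1)),
      ENNReal.ofReal ((1 + |s| ^ (1 + α)) * |iteratedDeriv j.1 f s|)) +
    starSemi α (iteratedDeriv k f)

/-- `f ∈ C^{k,α}_*(ℝ)`. -/
def MemCstar (k : ℕ) (α : ℝ) (f : ℝ → ℝ) : Prop :=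
  ContDiff ℝ k f ∧ starNorm k α f < ⊤

/-- Hölder seminorm in one variable. -/
def holderSlice (α : ℝ) (g : ℝ → ℝ) : ℝ≥0∞ :=
  ⨆ (s₁ : ℝ) (s₂ : ℝ), ENNReal.ofReal (|g s₁ - g s₂| / |s₁ - s₂| ^ α)

/-- The (unweighted) `C^{1,α}(ℝ)` norm. -/
def normC1Holder (α : ℝ) (f : ℝ → ℝ) : ℝ≥0∞ :=
  (⨆ s : ℝ, ENNReal.ofReal |f s|) + (⨆ s : ℝ, ENNReal.ofReal |deriv f s|) +
    holderSlice α (deriv f)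

/-- `f ∈ C^{1,α}(ℝ)` with finite norm. -/
def MemC1Holder (α : ℝ) (f : ℝ → ℝ) : Prop :=
  ContDiff ℝ 1 f ∧ normC1Holder α f < ⊤

/-- The filter `|ξ| → ∞` on `ℝ`. -/
def absAtTop : Filter ℝ := comap (fun ξ : ℝ => |ξ|) atTop

/-- `Φ^∞(s) = lim_{|ξ|→∞} Φ(ξ,s)`. -/
def PhiInf (Φ : ℝ → ℝ → ℝ) (s : ℝ) : ℝ := limUnder absAtTop fun ξ => Φ ξ s

/-- `Φ̄ = ξ (Φ - Φ^∞)`. -/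
def barPhi (Φ : ℝ → ℝ → ℝ) (ξ s : ℝ) : ℝ := ξ * (Φ ξ s - PhiInf Φ s)

/-- `Φ̃ = ξ ∂_ξ Φ - Φ`. -/
def tildePhi (Φ : ℝ → ℝ → ℝ) (ξ s : ℝ) : ℝ :=
  ξ * deriv (fun ξ' => Φ ξ' s) ξ - Φ ξ s

/-- The weight norm `⦀Φ⦀₀`. -/
def wNorm0 (Φ : ℝ → ℝ → ℝ) : ℝ≥0∞ :=
  (⨆ (s : ℝ) (ξ : {ξ : ℝ // |ξ| ≤ 1}), ENNReal.ofReal |Φ ξ.1 s|) +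
    ⨆ (s : ℝ) (ξ : {ξ : ℝ // 1 < |ξ|}),
      ENNReal.ofReal (|barPhi Φ ξ.1 s| + |tildePhi Φ ξ.1 s|)

/-- `Φ ∈ 𝒲⁰`. -/
def MemW0 (Φ : ℝ → ℝ → ℝ) : Prop :=
  (∃ M, ∀ ξ s, |Φ ξ s| ≤ M) ∧
  (∀ s, ∃ L, Tendsto (fun ξ => Φ ξ s) absAtTop (𝓝 L)) ∧
  (∀ s, ContDiffOn ℝ 1 (fun ξ => Φ ξ s) {(0 : ℝ)}ᶜ) ∧
  wNorm0 Φ < ⊤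

/-- `∂_s^j Φ`. -/
def dS (j : ℕ) (Φ : ℝ → ℝ → ℝ) : ℝ → ℝ → ℝ :=
  fun ξ s => iteratedDeriv j (fun s' => Φ ξ s') s

/-- Joint Hölder seminorm in `(ξ,s)`. -/
def holderJoint (α : ℝ) (Φ : ℝ → ℝ → ℝ) : ℝ≥0∞ :=
  ⨆ (p : ℝ × ℝ) (q : ℝ × ℝ),
    ENNReal.ofReal (|Φ p.1 p.2 - Φ q.1 q.2| / dist p q ^ α)

/-- The weight norm `⦀Φ⦀_{k,α}`. -/
def wNormK (k : ℕ) (α : ℝ) (Φ : ℝ → ℝ → ℝ) : ℝ≥0∞ :=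
  (⨆ j : Fin (k + 1), wNorm0 (dS j.1 Φ)) + holderJoint α (dS k Φ) +
    ⨆ ξ : {ξ : ℝ // 1 < |ξ|},
      (holderSlice α (fun s => barPhi (dS k Φ) ξ.1 s) +
        holderSlice α (fun s => tildePhi (dS k Φ) ξ.1 s))

/-- `Φ ∈ 𝒲^{k,α}`. -/
def MemWk (k : ℕ) (α : ℝ) (Φ : ℝ → ℝ → ℝ) : Prop :=
  (∀ j : Fin (k + 1), MemW0 (dS j.1 Φ)) ∧ wNormK k α Φ < ⊤

/-- `w ∈ C(S; C^{1,α}_*(ℝ))`, where `S ⊆ ℝ` is the time interval. -/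
def CstarFam (S : Set ℝ) (α : ℝ) (w : ℝ → ℝ → ℝ) : Prop :=
  (∀ t ∈ S, MemCstar 1 α fun s => w s t) ∧
    ∀ t₀ ∈ S, ∀ ε > (0 : ℝ), ∃ δ > (0 : ℝ), ∀ t ∈ S, |t - t₀| < δ →
      starNorm 1 α (fun s => w s t - w s t₀) ≤ ENNReal.ofReal ε

/-- `w ∈ C¹(S; C^{1,α}_*(ℝ))`. -/
def CstarFam1 (S : Set ℝ) (α : ℝ) (w : ℝ → ℝ → ℝ) : Prop :=
  CstarFam S α w ∧
    ∃ w' : ℝ → ℝ → ℝ, CstarFam S α w' ∧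
      ∀ (s : ℝ), ∀ t ∈ S, HasDerivWithinAt (fun τ => w s τ) (w' s t) S t

/-- `w ∈ C(S; C^{1,α}(ℝ))`. -/
def CplainFam (S : Set ℝ) (α : ℝ) (w : ℝ → ℝ → ℝ) : Prop :=
  (∀ t ∈ S, MemC1Holder α fun s => w s t) ∧
    ∀ t₀ ∈ S, ∀ ε > (0 : ℝ), ∃ δ > (0 : ℝ), ∀ t ∈ S, |t - t₀| < δ →
      normC1Holder α (fun s => w s t - w s t₀) ≤ ENNReal.ofReal ε

/-- Difference quotient `Z` associated to a profile `f`. -/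
def Zof (f : ℝ → ℝ) (ξ s : ℝ) : ℝ := (f s - f (s - ξ)) / ξ

/-- `Z_t(ξ,s) = (z(s,t) - z(s-ξ,t))/ξ`. -/
def Zfun (z : ℝ → ℝ → ℝ) (t ξ s : ℝ) : ℝ := Zof (fun s' => z s' t) ξ s

/-- `Φ₀(ξ,s) = 2ξ²/(ξ² + (z₀(s-ξ)-z₀(s))²)`. -/
def Phi0Of (z0 : ℝ → ℝ) (ξ s : ℝ) : ℝ :=
  2 * ξ ^ 2 / (ξ ^ 2 + (z0 (s - ξ) - z0 s) ^ 2)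

/-- `Φ₁ = -4 Z₀ Z₀' / (1+Z₀²)²`, where `Z₀'` is built from `z₁`. -/
def Phi1Of (z0 z1 : ℝ → ℝ) (ξ s : ℝ) : ℝ :=
  -4 * Zof z0 ξ s * Zof z1 ξ s / (1 + (Zof z0 ξ s) ^ 2) ^ 2

/-- `σ = (1-(∂_s z₀)²)/(1+(∂_s z₀)²)²`. -/
def sigmaOf (z0 : ℝ → ℝ) (s : ℝ) : ℝ :=
  (1 - (deriv z0 s) ^ 2) / (1 + (deriv z0 s) ^ 2) ^ 2

/-- The weights `Φ_±`: `e = 1` gives `Φ₊`, `e = -1` gives `Φ₋`. -/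
def PhiE (z : ℝ → ℝ → ℝ) (c e ξ s t : ℝ) : ℝ :=
  ξ ^ 2 / (ξ ^ 2 + (z (s - ξ) t - z s t) ^ 2) +
    ξ ^ 2 / (ξ ^ 2 + (z (s - ξ) t - z s t - e * (2 * c * t)) ^ 2)

/-- The normal interface velocity `u_ν^±` (`e = ±1`). -/
def uNuE (ρp ρm : ℝ) (z : ℝ → ℝ → ℝ) (c e s t : ℝ) : ℝ :=
  ((ρp - ρm) / (4 * π)) * pvIntegral fun ξ =>
    (deriv (fun s' => z s' t) (s - ξ) - deriv (fun s' => z s' t) s) / ξ *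
      PhiE z c e ξ s t

/-- The regular part `Δ_reg Φ`. -/
def DeltaReg (z : ℝ → ℝ → ℝ) (c ξ s t : ℝ) : ℝ :=
  ((Zfun z 0 ξ s) ^ 2 - (Zfun z t ξ s) ^ 2) / (2 * (1 + (Zfun z 0 ξ s) ^ 2)) *
    (2 / (1 + (Zfun z t ξ s) ^ 2) +
      1 / (1 + (Zfun z t ξ s + 2 * c * t / ξ) ^ 2) +
      1 / (1 + (Zfun z t ξ s - 2 * c * t / ξ) ^ 2))

/-- The singular part `Δ_sing Φ`. -/
def DeltaSing (z : ℝ → ℝ → ℝ) (c ξ s t : ℝ) : ℝ :=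
  (1 / (1 + (Zfun z 0 ξ s) ^ 2)) *
    ((-(2 * c * t * Zfun z t ξ s * ξ) - 2 * c ^ 2 * t ^ 2) /
        (ξ ^ 2 + (Zfun z t ξ s * ξ + 2 * c * t) ^ 2) +
      (2 * c * t * Zfun z t ξ s * ξ - 2 * c ^ 2 * t ^ 2) /
        (ξ ^ 2 + (Zfun z t ξ s * ξ - 2 * c * t) ^ 2))

/-- The weights `Φ_{i,j}` for the multi-interface construction. -/
def PhiIJ (z : ℝ → ℝ → ℝ) (ci cj ξ s t : ℝ) : ℝ :=
  ξ ^ 2 / (ξ ^ 2 + (z (s - ξ) t - z s t - (ci - cj) * t) ^ 2) +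
    ξ ^ 2 / (ξ ^ 2 + (z (s - ξ) t - z s t - (ci + cj) * t) ^ 2)

/-- The normal velocity `u_ν^{(i)}` on the interface with speed `ci`. -/
def uNuI (z : ℝ → ℝ → ℝ) (cs : ℕ → ℝ) (N : ℕ) (ci s t : ℝ) : ℝ :=
  ∑ j ∈ Finset.Icc 1 N, (1 / (2 * π * (N : ℝ))) *
    pvIntegral fun ξ =>
      (deriv (fun s' => z s' t) (s - ξ) - deriv (fun s' => z s' t) s) / ξ *
        PhiIJ z ci (cs j) ξ s t

/-! ### The IPM system (time is the first coordinate of space-time `ℝ × ℝ × ℝ`) -/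

/-- Euclidean inner product on `ℝ²`. -/
def dot2 (a b : ℝ × ℝ) : ℝ := a.1 * b.1 + a.2 * b.2

/-- `v^⊥ = (-v₂, v₁)`. -/
def perp (v : ℝ × ℝ) : ℝ × ℝ := (-v.2, v.1)

/-- Euclidean norm on `ℝ²`. -/
def norm2 (v : ℝ × ℝ) : ℝ := Real.sqrt (v.1 ^ 2 + v.2 ^ 2)

/-- Spatial gradient of a space-time test function. -/
def gradX (φ : ℝ × ℝ × ℝ → ℝ) (p : ℝ × ℝ × ℝ) : ℝ × ℝ :=
  (fderiv ℝ φ p (0, 1, 0), fderiv ℝ φ p (0, 0, 1))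

/-- Gradient of a spatial test function. -/
def gradS (ψ : ℝ × ℝ → ℝ) (x : ℝ × ℝ) : ℝ × ℝ :=
  (fderiv ℝ ψ x (1, 0), fderiv ℝ ψ x (0, 1))

/-- Space-time test function on `[0,T) × ℝ²`. -/
def IsTest (T : ℝ) (φ : ℝ × ℝ × ℝ → ℝ) : Prop :=
  ContDiff ℝ (⊤ : ℕ∞) φ ∧ HasCompactSupport φ ∧ ∀ p : ℝ × ℝ × ℝ, T ≤ p.1 → φ p = 0

open scoped Classical in
/-- The Muskat initial datum determined by the interface `z₀` and `ρ⁺, ρ⁻`. -/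
def muskat (z0 : ℝ → ℝ) (ρp ρm : ℝ) : ℝ × ℝ → ℝ := fun x =>
  if z0 x.1 < x.2 then ρp else ρm

open scoped Classical in
/-- Piecewise constant density with mixing zone `{|x₂ - z(x₁,t)| < ct}`. -/
def pieceDensity (z : ℝ → ℝ → ℝ) (c ρp ρm : ℝ) : ℝ → ℝ × ℝ → ℝ := fun t x =>
  if z x.1 t + c * t < x.2 then ρp else if x.2 < z x.1 t - c * t then ρm else 0

/-- Open space-time slab `(0,T) × ℝ²`. -/
def spaceTime (T : ℝ) : Set (ℝ × ℝ × ℝ) := Ioo 0 T ×ˢ (univ : Set (ℝ × ℝ))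

/-- Weak solution of the IPM system on `ℝ² × [0,T)` with initial datum `ρ₀`. -/
structure IsWeakSol (T : ℝ) (ρ₀ : ℝ × ℝ → ℝ) (ρ : ℝ → ℝ × ℝ → ℝ)
    (u : ℝ → ℝ × ℝ → ℝ × ℝ) : Prop where
  meas_ρ : Measurable fun p : ℝ × ℝ × ℝ => ρ p.1 p.2
  meas_u : Measurable fun p : ℝ × ℝ × ℝ => u p.1 p.2
  bdd : ∃ M, ∀ t x, |ρ t x| + norm2 (u t x) ≤ M
  transport : ∀ φ : ℝ × ℝ × ℝ → ℝ, IsTest T φ →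
    (∫ p in spaceTime T,
        ρ p.1 p.2 * (fderiv ℝ φ p (1, 0, 0) + dot2 (u p.1 p.2) (gradX φ p))) +
      (∫ x : ℝ × ℝ, φ (0, x) * ρ₀ x) = 0
  divfree : ∀ᵐ t ∂(volume.restrict (Ioo (0 : ℝ) T)),
    ∀ ψ : ℝ × ℝ → ℝ, ContDiff ℝ (⊤ : ℕ∞) ψ → HasCompactSupport ψ →
      (∫ x : ℝ × ℝ, dot2 (u t x) (gradS ψ x)) = 0
  darcy : ∀ᵐ t ∂(volume.restrict (Ioo (0 : ℝ) T)),
    ∀ ψ : ℝ × ℝ → ℝ, ContDiff ℝ (⊤ : ℕ∞) ψ → HasCompactSupport ψ →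
      (∫ x : ℝ × ℝ, dot2 (u t x + ((0 : ℝ), ρ t x)) (perp (gradS ψ x))) = 0

/-- Admissibility: `ρ ∈ [min(a,b), max(a,b)]` a.e. in space-time. -/
def AdmissibleBetween (T a b : ℝ) (ρ : ℝ → ℝ × ℝ → ℝ) : Prop :=
  ∀ᵐ p : ℝ × ℝ × ℝ ∂(volume.restrict (spaceTime T)),
    ρ p.1 p.2 ∈ Icc (min a b) (max a b)

/-- Admissible subsolution of the IPM system on `ℝ² × [0,T)` (normalized `ρ± = ±1`). -/
structure IsSubsolution (T : ℝ) (ρ₀ : ℝ × ℝ → ℝ) (ρ : ℝ → ℝ × ℝ → ℝ)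
    (u m : ℝ → ℝ × ℝ → ℝ × ℝ) (Ωp Ωm Ωmix : Set (ℝ × ℝ × ℝ)) : Prop where
  openP : ∃ U : Set (ℝ × ℝ × ℝ), IsOpen U ∧ Ωp = U ∩ (Ico 0 T ×ˢ (univ : Set (ℝ × ℝ)))
  openM : ∃ U : Set (ℝ × ℝ × ℝ), IsOpen U ∧ Ωm = U ∩ (Ico 0 T ×ˢ (univ : Set (ℝ × ℝ)))
  openMix : ∃ U : Set (ℝ × ℝ × ℝ), IsOpen U ∧ Ωmix = U ∩ (Ico 0 T ×ˢ (univ : Set (ℝ × ℝ)))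
  cover : (Ico 0 T ×ˢ (univ : Set (ℝ × ℝ))) ⊆ closure Ωp ∪ closure Ωm ∪ Ωmix
  meas : Measurable fun p : ℝ × ℝ × ℝ => (ρ p.1 p.2, u p.1 p.2, m p.1 p.2)
  bdd : ∃ M, ∀ t x, |ρ t x| + norm2 (u t x) + norm2 (m t x) ≤ M
  transport : ∀ φ : ℝ × ℝ × ℝ → ℝ, IsTest T φ →
    (∫ p in spaceTime T,
        (ρ p.1 p.2 * fderiv ℝ φ p (1, 0, 0) + dot2 (m p.1 p.2) (gradX φ p))) +
      (∫ x : ℝ × ℝ, φ (0, x) * ρ₀ x) = 0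
  divfree : ∀ᵐ t ∂(volume.restrict (Ioo (0 : ℝ) T)),
    ∀ ψ : ℝ × ℝ → ℝ, ContDiff ℝ (⊤ : ℕ∞) ψ → HasCompactSupport ψ →
      (∫ x : ℝ × ℝ, dot2 (u t x) (gradS ψ x)) = 0
  darcy : ∀ᵐ t ∂(volume.restrict (Ioo (0 : ℝ) T)),
    ∀ ψ : ℝ × ℝ → ℝ, ContDiff ℝ (⊤ : ℕ∞) ψ → HasCompactSupport ψ →
      (∫ x : ℝ × ℝ, dot2 (u t x + ((0 : ℝ), ρ t x)) (perp (gradS ψ x))) = 0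
  constraint : ∀ᵐ p : ℝ × ℝ × ℝ ∂(volume.restrict (spaceTime T)),
    norm2 (m p.1 p.2 - ρ p.1 p.2 • u p.1 p.2 + ((0 : ℝ), (1 - (ρ p.1 p.2) ^ 2) / 2)) ≤
      (1 - (ρ p.1 p.2) ^ 2) / 2
  pureFluid : ∀ p ∈ Ωp ∪ Ωm, |ρ p.1 p.2| = 1
  contMix : ContinuousOn (fun p : ℝ × ℝ × ℝ => (ρ p.1 p.2, u p.1 p.2, m p.1 p.2)) Ωmix
  strictMix : ∀ p ∈ Ωmix,
    norm2 (m p.1 p.2 - ρ p.1 p.2 • u p.1 p.2 + ((0 : ℝ), (1 - (ρ p.1 p.2) ^ 2) / 2)) <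
      (1 - (ρ p.1 p.2) ^ 2) / 2

/-- Euclidean space-time ball `B_r(x₀,t₀)` (time is the first coordinate). -/
def ball3 (t₀ : ℝ) (x₀ : ℝ × ℝ) (r : ℝ) : Set (ℝ × ℝ × ℝ) :=
  {p | (p.1 - t₀) ^ 2 + (p.2.1 - x₀.1) ^ 2 + (p.2.2 - x₀.2) ^ 2 < r ^ 2}

/-- The mixing property of a density inside the mixing zone. -/
def MixingProp (T : ℝ) (Ωmix : Set (ℝ × ℝ × ℝ)) (ρ : ℝ → ℝ × ℝ → ℝ) : Prop :=
  ∀ r > (0 : ℝ), ∀ t₀ ∈ Ioo (0 : ℝ) T, ∀ x₀ : ℝ × ℝ, ball3 t₀ x₀ r ⊆ Ωmix →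
    0 < volume {p ∈ ball3 t₀ x₀ r | ρ p.1 p.2 = 1} ∧
    0 < volume {p ∈ ball3 t₀ x₀ r | ρ p.1 p.2 = -1}

/-! ### Auxiliary lemmas for Statement 6 -/

instance absAtTop_neBot : absAtTop.NeBot := by
  refine Filter.comap_neBot (fun t ht => ?_)
  obtain ⟨b, hb⟩ := mem_atTop_sets.mp ht
  exact ⟨max b 0, hb _ (by rw [abs_of_nonneg (le_max_right b 0)]; exact le_max_left b 0)⟩

lemma tendsto_abs_absAtTop : Tendsto (fun ξ : ℝ => |ξ|) absAtTop atTop :=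
  tendsto_comap

lemma frac_nonneg (x q : ℝ) : 0 ≤ x^2/(x^2+q^2) := by positivity

lemma frac_le_one (x q : ℝ) : x^2/(x^2+q^2) ≤ 1 := by
  rcases eq_or_ne x 0 with h | h
  · simp [h]
  · exact div_le_one_of_le₀ (by nlinarith [sq_nonneg q]) (by positivity)

lemma frac_abs_le_one (x q : ℝ) : |x^2/(x^2+q^2)| ≤ 1 := by
  rw [abs_of_nonneg (frac_nonneg x q)]; exact frac_le_one x q

lemma frac_eq {x : ℝ} (q : ℝ) (hx : x ≠ 0) : x^2/(x^2+q^2) = 1/(1+(q/x)^2) := by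
  have h : (0:ℝ) < x^2+q^2 := by positivity
  field_simp

lemma key1 (β ξ u U : ℝ) (hξ : 1 ≤ |ξ|) (hu : |u| ≤ U) :
    |ξ * (ξ^2/(ξ^2+(-β*ξ+u)^2) - 1/(1+β^2))| ≤ U*(2*|β|+U) := by
  have hU : 0 ≤ U := le_trans (abs_nonneg u) hu
  have hx : ξ ≠ 0 := by intro h; rw [h] at hξ; simp at hξ; linarith
  set w : ℝ := -β + u/ξ with hw
  have hwe : -β*ξ+u = w*ξ := by
    rw [hw, add_mul, div_mul_cancel₀ _ hx]
  have h1 : ξ^2/(ξ^2+(-β*ξ+u)^2) = 1/(1+w^2) := by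
    rw [hwe, mul_pow, show ξ^2 + w^2*ξ^2 = ξ^2*(1+w^2) by ring, ← div_div,
      div_self (by positivity : (ξ:ℝ)^2 ≠ 0)]
  have h2 : ξ * (1/(1+w^2) - 1/(1+β^2)) = (β-w)*u/((1+w^2)*(1+β^2)) := by
    have hne1 : (1:ℝ)+w^2 ≠ 0 := by positivity
    have hne2 : (1:ℝ)+β^2 ≠ 0 := by positivity
    rw [hw]
    field_simp
    ring
  rw [h1, h2]
  have hden : (1:ℝ) ≤ (1+w^2)*(1+β^2) := by nlinarith [sq_nonneg w, sq_nonneg β, sq_nonneg (w*β)]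
  have habs : |(β-w)*u/((1+w^2)*(1+β^2))| ≤ |(β-w)*u| := by
    rw [abs_div, abs_of_nonneg (by positivity : (0:ℝ) ≤ (1+w^2)*(1+β^2))]
    exact div_le_self (abs_nonneg _) hden
  refine habs.trans ?_
  rw [abs_mul]
  have hbw : |β - w| ≤ 2*|β| + U := by
    rw [show β - w = 2*β - u/ξ by rw [hw]; ring]
    refine (abs_sub _ _).trans ?_
    have h3 : |u/ξ| ≤ U := by
      rw [abs_div]
      calc |u|/|ξ| ≤ |u|/1 := by gcongr <;> linarith
        _ = |u| := by ring
        _ ≤ U := hu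
    have h2b : |2*β| = 2*|β| := by rw [abs_mul]; norm_num
    linarith
  calc |β-w| * |u| ≤ (2*|β|+U)*U :=
        mul_le_mul hbw hu (abs_nonneg u) (by positivity)
    _ = U*(2*|β|+U) := by ring

lemma key2 (ξ q q' a b : ℝ) (hξ : 1 ≤ |ξ|) (hq : |q| ≤ a*|ξ|) (hq' : |q'| ≤ b) :
    |ξ * (2*ξ*q*(q - ξ*q')/(ξ^2+q^2)^2)| ≤ 2*a*(a+b) := by
  have hx : (0:ℝ) < |ξ| := lt_of_lt_of_le one_pos hξ
  have ha : 0 ≤ a := by nlinarith [abs_nonneg q]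
  have hb : 0 ≤ b := le_trans (abs_nonneg q') hq'
  have hx4 : (1:ℝ) ≤ ξ^4 := by
    calc (1:ℝ) = 1^4 := by norm_num
      _ ≤ |ξ|^4 := pow_le_pow_left₀ one_pos.le hξ 4
      _ = ξ^4 := by rw [← abs_pow, abs_of_nonneg (by positivity : (0:ℝ) ≤ ξ^4)]
  have hx4' : (0:ℝ) < ξ^4 := lt_of_lt_of_le one_pos hx4
  have h2 : |q - ξ*q'| ≤ (a+b)*|ξ| := by
    refine (abs_sub _ _).trans ?_
    rw [abs_mul]
    have h3 : |ξ| * |q'| ≤ |ξ| * b := mul_le_mul_of_nonneg_left hq' hx.le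
    nlinarith
  have hp : |q| * |q - ξ*q'| ≤ a*(a+b)*ξ^2 := by
    calc |q| * |q - ξ*q'| ≤ (a*|ξ|)*((a+b)*|ξ|) :=
          mul_le_mul hq h2 (abs_nonneg _) (by positivity)
      _ = a*(a+b)*(|ξ|^2) := by ring
      _ = a*(a+b)*ξ^2 := by rw [sq_abs]
  have hnum : |ξ * (2*ξ*q*(q - ξ*q'))| ≤ 2*a*(a+b)*ξ^4 := by
    calc |ξ * (2*ξ*q*(q - ξ*q'))| = |2*ξ^2| * (|q| * |q - ξ*q'|) := by
          rw [show ξ*(2*ξ*q*(q-ξ*q')) = (2*ξ^2)*(q*(q-ξ*q')) by ring,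
            abs_mul (2*ξ^2) (q*(q-ξ*q')), abs_mul q (q-ξ*q')]
      _ = 2*ξ^2 * (|q| * |q - ξ*q'|) := by
          rw [abs_of_nonneg (by positivity : (0:ℝ) ≤ 2*ξ^2)]
      _ ≤ 2*ξ^2 * (a*(a+b)*ξ^2) := by
          apply mul_le_mul_of_nonneg_left hp (by positivity)
      _ = 2*a*(a+b)*ξ^4 := by ring
  have hden : ξ^4 ≤ (ξ^2+q^2)^2 := by nlinarith [sq_nonneg q, sq_nonneg (ξ^2+q^2)]
  have hdenpos : (0:ℝ) < (ξ^2+q^2)^2 := lt_of_lt_of_le hx4' hden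
  rw [show ξ * (2*ξ*q*(q - ξ*q')/(ξ^2+q^2)^2) = (ξ * (2*ξ*q*(q - ξ*q')))/(ξ^2+q^2)^2 by ring,
    abs_div, abs_of_nonneg hdenpos.le]
  calc |ξ * (2*ξ*q*(q - ξ*q'))| / (ξ^2+q^2)^2
      ≤ (2*a*(a+b)*ξ^4) / (ξ^4) := by gcongr
    _ = 2*a*(a+b) := by rw [mul_div_assoc, div_self hx4'.ne', mul_one]

lemma tendsto_frac (F u : ℝ → ℝ) (β U : ℝ) (hu : ∀ ξ, |u ξ| ≤ U)
    (hF : ∀ ξ, ξ ≠ 0 → F ξ = ξ^2/(ξ^2+(-β*ξ + u ξ)^2)) :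
    Tendsto F absAtTop (𝓝 (1/(1+β^2))) := by
  have habs : Tendsto (fun ξ : ℝ => |ξ|) absAtTop atTop := tendsto_comap
  have hne : ∀ᶠ ξ : ℝ in absAtTop, ξ ≠ 0 := by
    filter_upwards [habs.eventually (eventually_ge_atTop 1)] with ξ h
    intro h0; rw [h0] at h; simp at h; linarith
  have h0 : Tendsto (fun ξ => u ξ / ξ) absAtTop (𝓝 0) := by
    apply squeeze_zero_norm (a := fun ξ => U/|ξ|)
    · intro ξ
      rcases eq_or_ne ξ 0 with h | h
      · simp [h]
      · rw [Real.norm_eq_abs, abs_div]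
        exact (div_le_div_iff_of_pos_right (by positivity : (0:ℝ) < |ξ|)).mpr (hu ξ)
    · exact Tendsto.div_atTop tendsto_const_nhds habs
  have h1 : Tendsto (fun ξ => -β + u ξ/ξ) absAtTop (𝓝 (-β)) := by
    simpa using tendsto_const_nhds.add h0
  have h2 : Tendsto (fun x : ℝ => 1/(1+x^2)) (𝓝 (-β)) (𝓝 (1/(1+β^2))) := by
    have hct : ContinuousAt (fun x : ℝ => 1/(1+x^2)) (-β) :=
      ContinuousAt.div continuousAt_const (by fun_prop) (by positivity)
    simpa [neg_sq] using hct.tendsto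
  refine (h2.comp h1).congr' ?_
  filter_upwards [hne] with ξ h
  rw [Function.comp_apply, hF ξ h, frac_eq _ h]
  congr 2
  field_simp

lemma normC1Holder_bound {α : ℝ} {f : ℝ → ℝ} {C : ℝ≥0∞} (h : normC1Holder α f ≤ C)
    (hC : C ≠ ⊤) (s : ℝ) : |f s| ≤ C.toReal ∧ |deriv f s| ≤ C.toReal := by
  constructor
  · have h1 : ENNReal.ofReal |f s| ≤ normC1Holder α f := by
      refine le_trans ?_ (le_trans le_self_add le_self_add)
      exact le_iSup (fun s => ENNReal.ofReal |f s|) s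
    rw [← ENNReal.ofReal_le_iff_le_toReal hC]
    exact le_trans h1 h
  · have h1 : ENNReal.ofReal |deriv f s| ≤ normC1Holder α f := by
      refine le_trans ?_ (le_trans le_add_self le_self_add)
      exact le_iSup (fun s => ENNReal.ofReal |deriv f s|) s
    rw [← ENNReal.ofReal_le_iff_le_toReal hC]
    exact le_trans h1 h

lemma uniform_bound {α T : ℝ} (zbar : ℝ → ℝ → ℝ)
    (hreg : CplainFam (Icc 0 T) α zbar) :
    ∃ K : ℝ, 0 ≤ K ∧ ∀ t ∈ Icc (0:ℝ) T, ∀ s,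
      |zbar s t| ≤ K ∧ |deriv (fun s' => zbar s' t) s| ≤ K := by
  obtain ⟨hmem, hcont⟩ := hreg
  have hδ : ∀ t₀ ∈ Icc (0:ℝ) T, ∃ δ > (0:ℝ), ∀ t ∈ Icc (0:ℝ) T, |t - t₀| < δ →
      normC1Holder α (fun s => zbar s t - zbar s t₀) ≤ ENNReal.ofReal 1 :=
    fun t₀ h => hcont t₀ h 1 one_pos
  choose! δ hδpos hδ using hδ
  have hcover : Icc (0:ℝ) T ⊆ ⋃ t₀ ∈ Icc (0:ℝ) T, Metric.ball t₀ (δ t₀) := fun t ht =>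
    mem_biUnion ht (Metric.mem_ball_self (hδpos t ht))
  obtain ⟨b', hb'sub, hb'fin, hb'cover⟩ :=
    isCompact_Icc.elim_finite_subcover_image (fun t₀ _ => Metric.isOpen_ball) hcover
  classical
  set Cf : ℝ → ℝ := fun i => (normC1Holder α (fun s => zbar s i)).toReal with hCf
  have hCfnn : ∀ i, 0 ≤ Cf i := fun i => ENNReal.toReal_nonneg
  refine ⟨1 + ∑ i ∈ hb'fin.toFinset, Cf i, by positivity, ?_⟩
  intro t ht s
  obtain ⟨i, hi, hti⟩ := mem_iUnion₂.mp (hb'cover ht)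
  have hiI : i ∈ Icc (0:ℝ) T := hb'sub hi
  have hdist : |t - i| < δ i := by
    rw [← Real.dist_eq]; exact hti
  have hnd := hδ i hiI t ht hdist
  have hdiff := normC1Holder_bound hnd (by simp) s
  have hCi : Cf i ≤ ∑ j ∈ hb'fin.toFinset, Cf j :=
    Finset.single_le_sum (fun j _ => hCfnn j) (hb'fin.mem_toFinset.mpr hi)
  have hbase := normC1Holder_bound (le_refl (normC1Holder α (fun s => zbar s i)))
    (hmem i hiI).2.ne s
  have htr : (ENNReal.ofReal 1).toReal = 1 := by simp
  have hd1 : Differentiable ℝ (fun s' => zbar s' t) :=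
    (hmem t ht).1.differentiable one_ne_zero
  have hd2 : Differentiable ℝ (fun s' => zbar s' i) :=
    (hmem i hiI).1.differentiable one_ne_zero
  have hderiv : deriv (fun s' => zbar s' t - zbar s' i) s =
      deriv (fun s' => zbar s' t) s - deriv (fun s' => zbar s' i) s :=
    deriv_sub (hd1 s) (hd2 s)
  constructor
  · have : |zbar s t - zbar s i| ≤ 1 := by
      have := hdiff.1; rwa [htr] at this
    calc |zbar s t| ≤ |zbar s t - zbar s i| + |zbar s i| := by
          simpa using abs_add_le (zbar s t - zbar s i) (zbar s i)
      _ ≤ 1 + Cf i := add_le_add this hbase.1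
      _ ≤ 1 + ∑ j ∈ hb'fin.toFinset, Cf j := by linarith
  · have h1 : |deriv (fun s' => zbar s' t) s - deriv (fun s' => zbar s' i) s| ≤ 1 := by
      have := hdiff.2; rw [htr] at this; rwa [hderiv] at this
    calc |deriv (fun s' => zbar s' t) s|
        ≤ |deriv (fun s' => zbar s' t) s - deriv (fun s' => zbar s' i) s| +
          |deriv (fun s' => zbar s' i) s| := by
          simpa using abs_add_le (deriv (fun s' => zbar s' t) s - deriv (fun s' => zbar s' i) s)
            (deriv (fun s' => zbar s' i) s)
      _ ≤ 1 + Cf i := add_le_add h1 hbase.2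
      _ ≤ 1 + ∑ j ∈ hb'fin.toFinset, Cf j := by linarith

set_option maxHeartbeats 2000000 in
/-- the weights `Φ_±` belong to `𝒲⁰`, uniformly for `t ∈ [0,T]`. -/
theorem PhiPM_mem_W0_uniform
    (α β T c : ℝ) (hα : 0 < α) (hα1 : α < 1) (hT : 0 < T) (hc : 0 < c)
    (z zbar : ℝ → ℝ → ℝ)
    (hsplit : ∀ s t, z s t = β * s + zbar s t)
    (hreg : CplainFam (Icc 0 T) α zbar) :
    (∀ t ∈ Icc (0 : ℝ) T, ∀ e : ℝ, e = 1 ∨ e = -1 →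
        MemW0 fun ξ s => PhiE z c e ξ s t) ∧
      ∃ M : ℝ, ∀ t ∈ Icc (0 : ℝ) T, ∀ e : ℝ, e = 1 ∨ e = -1 →
        wNorm0 (fun ξ s => PhiE z c e ξ s t) ≤ ENNReal.ofReal M := by
  obtain ⟨K, hK0, hK⟩ := uniform_bound zbar hreg
  set U : ℝ := 2*K + 2*c*T with hUdef
  set a : ℝ := |β| + 2*K + 2*c*T with hadef
  set b : ℝ := |β| + K with hbdef
  have hU0 : 0 ≤ U := by rw [hUdef]; positivity
  have ha0 : 0 ≤ a := by rw [hadef]; positivity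
  have hb0 : 0 ≤ b := by rw [hbdef]; positivity
  set M1 : ℝ := 2*(U*(2*|β|+U)) with hM1def
  have hM10 : 0 ≤ M1 := by rw [hM1def]; positivity
  set M2 : ℝ := 2*(2*a*(a+b)) + 2 with hM2def
  have hM20 : 0 ≤ M2 := by rw [hM2def]; positivity
  set M : ℝ := 2 + (M1 + M2) with hMdef
  have main : ∀ t ∈ Icc (0:ℝ) T, ∀ e : ℝ, e = 1 ∨ e = -1 →
      MemW0 (fun ξ s => PhiE z c e ξ s t) ∧
      wNorm0 (fun ξ s => PhiE z c e ξ s t) ≤ ENNReal.ofReal M := by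
    intro t ht e he
    set Φ : ℝ → ℝ → ℝ := fun ξ s => PhiE z c e ξ s t with hΦ
    have hzbK := hK t ht
    have hzbarC : ContDiff ℝ 1 (fun s' => zbar s' t) := (hreg.1 t ht).1
    have hgeq : (fun s' => z s' t) = fun s' => β*s' + zbar s' t :=
      funext fun s' => hsplit s' t
    have hgC : ContDiff ℝ 1 (fun s' => z s' t) := by
      rw [hgeq]; exact (contDiff_const.mul contDiff_id).add hzbarC
    set G : ℝ → ℝ := fun x => β + deriv (fun s' => zbar s' t) x with hGdef
    have hgd : ∀ x, HasDerivAt (fun s' => z s' t) (G x) x := by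
      intro x
      have h1 : HasDerivAt (fun s' : ℝ => β*s') β x := by
        simpa using (hasDerivAt_id x).const_mul β
      have h2 : HasDerivAt (fun s' => zbar s' t) (deriv (fun s' => zbar s' t) x) x :=
        ((hzbarC.differentiable one_ne_zero) x).hasDerivAt
      rw [hgeq]; exact h1.add h2
    have hGb : ∀ x, |G x| ≤ b := by
      intro x
      refine (abs_add_le _ _).trans ?_
      rw [hbdef]
      exact add_le_add le_rfl (hzbK x).2
    set d : ℝ := e*(2*c*t) with hddef
    have hdb : |d| ≤ 2*c*T := by
      have h1 : |e| = 1 := by rcases he with h|h <;> simp [h]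
      rw [hddef, abs_mul, h1, one_mul,
        abs_of_nonneg (by nlinarith [ht.1] : (0:ℝ) ≤ 2*c*t)]
      nlinarith [ht.2]
    have hzdiff : ∀ s ξ : ℝ, z (s-ξ) t - z s t = -β*ξ + (zbar (s-ξ) t - zbar s t) := by
      intro s ξ; rw [hsplit, hsplit]; ring
    have hu1b : ∀ s ξ : ℝ, |zbar (s-ξ) t - zbar s t| ≤ 2*K := by
      intro s ξ
      have h1 := (hzbK (s-ξ)).1
      have h2 := (hzbK s).1
      refine (abs_sub _ _).trans ?_
      linarith
    have hu1bU : ∀ s ξ : ℝ, |zbar (s-ξ) t - zbar s t| ≤ U := by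
      intro s ξ
      have := hu1b s ξ
      rw [hUdef]; nlinarith [ht.1]
    have hu2bU : ∀ s ξ : ℝ, |zbar (s-ξ) t - zbar s t - d| ≤ U := by
      intro s ξ
      refine (abs_sub _ _).trans ?_
      have := hu1b s ξ
      rw [hUdef]; linarith [hdb]
    have htend : ∀ s, Tendsto (fun ξ => Φ ξ s) absAtTop (𝓝 (1/(1+β^2) + 1/(1+β^2))) := by
      intro s
      have t1 : Tendsto (fun ξ : ℝ => ξ^2/(ξ^2+(z (s-ξ) t - z s t)^2)) absAtTop
          (𝓝 (1/(1+β^2))) := by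
        apply tendsto_frac _ (fun ξ => zbar (s-ξ) t - zbar s t) β U (hu1bU s)
        intro ξ _; rw [hzdiff s ξ]
      have t2 : Tendsto (fun ξ : ℝ => ξ^2/(ξ^2+(z (s-ξ) t - z s t - d)^2)) absAtTop
          (𝓝 (1/(1+β^2))) := by
        apply tendsto_frac _ (fun ξ => zbar (s-ξ) t - zbar s t - d) β U (hu2bU s)
        intro ξ _
        rw [show z (s-ξ) t - z s t - d = -β*ξ + (zbar (s-ξ) t - zbar s t - d) by
          rw [hzdiff s ξ]; ring]
      refine Tendsto.congr (fun ξ => ?_) (t1.add t2)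
      simp only [hΦ, PhiE, hddef]
    have hPhiInf : ∀ s, PhiInf Φ s = 1/(1+β^2) + 1/(1+β^2) := fun s =>
      (htend s).limUnder_eq
    have hbd : ∀ ξ s, |Φ ξ s| ≤ 2 := by
      intro ξ s
      simp only [hΦ, PhiE]
      refine (abs_add_le _ _).trans ?_
      have l1 := frac_abs_le_one ξ (z (s-ξ) t - z s t)
      have l2 := frac_abs_le_one ξ (z (s-ξ) t - z s t - e*(2*c*t))
      have m1 := abs_le.mp l1
      have m2 := abs_le.mp l2
      calc |ξ^2/(ξ^2+(z (s-ξ) t - z s t)^2)| + |ξ^2/(ξ^2+(z (s-ξ) t - z s t - e*(2*c*t))^2)|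
          ≤ 1 + 1 := add_le_add l1 l2
        _ = 2 := by norm_num
    have hcd : ∀ s, ContDiffOn ℝ 1 (fun ξ => Φ ξ s) {(0:ℝ)}ᶜ := by
      intro s
      have hq1C : ContDiff ℝ 1 (fun ξ : ℝ => z (s-ξ) t - z s t) := by
        have h := hgC.comp ((contDiff_const (c := s)).sub contDiff_id)
        exact h.sub contDiff_const
      have hq2C : ContDiff ℝ 1 (fun ξ : ℝ => z (s-ξ) t - z s t - e*(2*c*t)) :=
        hq1C.sub contDiff_const
      simp only [hΦ, PhiE]
      apply ContDiffOn.add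
      · refine ContDiffOn.div (contDiff_id.pow 2).contDiffOn
          (((contDiff_id.pow 2).add (hq1C.pow 2)).contDiffOn) ?_
        intro ξ hξ
        have h0 : ξ ≠ 0 := Set.mem_compl_singleton_iff.mp hξ
        have : (0:ℝ) < ξ^2 + (z (s-ξ) t - z s t)^2 := by positivity
        exact ne_of_gt this
      · refine ContDiffOn.div (contDiff_id.pow 2).contDiffOn
          (((contDiff_id.pow 2).add (hq2C.pow 2)).contDiffOn) ?_
        intro ξ hξ
        have h0 : ξ ≠ 0 := Set.mem_compl_singleton_iff.mp hξ
        have : (0:ℝ) < ξ^2 + (z (s-ξ) t - z s t - e*(2*c*t))^2 := by positivity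
        exact ne_of_gt this
    have hbar : ∀ s ξ : ℝ, 1 < |ξ| → |barPhi Φ ξ s| ≤ M1 := by
      intro s ξ hξ
      have hξ1 : 1 ≤ |ξ| := hξ.le
      show |ξ * (Φ ξ s - PhiInf Φ s)| ≤ M1
      rw [hPhiInf s]
      have hsplit2 : ξ * (Φ ξ s - (1/(1+β^2) + 1/(1+β^2))) =
          ξ * (ξ^2/(ξ^2+(-β*ξ + (zbar (s-ξ) t - zbar s t))^2) - 1/(1+β^2)) +
          ξ * (ξ^2/(ξ^2+(-β*ξ + (zbar (s-ξ) t - zbar s t - d))^2) - 1/(1+β^2)) := by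
        simp only [hΦ, PhiE]
        rw [show z (s-ξ) t - z s t - e*(2*c*t)
            = -β*ξ + (zbar (s-ξ) t - zbar s t - d) by rw [hzdiff s ξ, hddef]; ring]
        rw [hzdiff s ξ]
        ring
      rw [hsplit2]
      refine (abs_add_le _ _).trans ?_
      have k1 := key1 β ξ (zbar (s-ξ) t - zbar s t) U hξ1 (hu1bU s ξ)
      have k2 := key1 β ξ (zbar (s-ξ) t - zbar s t - d) U hξ1 (hu2bU s ξ)
      rw [hM1def]; linarith
    have htilde : ∀ s ξ : ℝ, 1 < |ξ| → |tildePhi Φ ξ s| ≤ M2 := by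
      intro s ξ hξ
      have hξ1 : 1 ≤ |ξ| := hξ.le
      have hξ0 : ξ ≠ 0 := by
        intro h; rw [h] at hξ; simp at hξ; linarith
      set q1 : ℝ := z (s-ξ) t - z s t with hq1def
      set q2 : ℝ := z (s-ξ) t - z s t - e*(2*c*t) with hq2def
      have hsx : HasDerivAt (fun ξ' : ℝ => s - ξ') (-1) ξ := by
        simpa using (hasDerivAt_id ξ).const_sub s
      have hq1d : HasDerivAt (fun ξ' => z (s-ξ') t - z s t) (-G (s-ξ)) ξ := by
        have h := ((hgd (s-ξ)).comp ξ hsx).sub_const (z s t)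
        simpa [Function.comp] using h
      have hq2d : HasDerivAt (fun ξ' => z (s-ξ') t - z s t - e*(2*c*t)) (-G (s-ξ)) ξ :=
        hq1d.sub_const _
      have hne1 : ξ^2 + q1^2 ≠ 0 := by positivity
      have hne2 : ξ^2 + q2^2 ≠ 0 := by positivity
      have hD1 : HasDerivAt (fun ξ' => ξ'^2 + (z (s-ξ') t - z s t)^2)
          ((2:ℕ)*ξ^(2-1) + (2:ℕ)*(z (s-ξ) t - z s t)^(2-1)*(-G (s-ξ))) ξ :=
        (hasDerivAt_pow 2 ξ).add (hq1d.pow 2)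
      have hD2 : HasDerivAt (fun ξ' => ξ'^2 + (z (s-ξ') t - z s t - e*(2*c*t))^2)
          ((2:ℕ)*ξ^(2-1) + (2:ℕ)*(z (s-ξ) t - z s t - e*(2*c*t))^(2-1)*(-G (s-ξ))) ξ :=
        (hasDerivAt_pow 2 ξ).add (hq2d.pow 2)
      have hF1 := HasDerivAt.div (hasDerivAt_pow 2 ξ) hD1 (by rw [← hq1def]; exact hne1)
      have hF2 := HasDerivAt.div (hasDerivAt_pow 2 ξ) hD2 (by rw [← hq2def]; exact hne2)
      have hsum : HasDerivAt (fun ξ' => Φ ξ' s)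
          (((2:ℕ)*ξ^(2-1) * (ξ^2 + (z (s-ξ) t - z s t)^2)
            - ξ^2 * ((2:ℕ)*ξ^(2-1) + (2:ℕ)*(z (s-ξ) t - z s t)^(2-1)*(-G (s-ξ))))
              / (ξ^2 + (z (s-ξ) t - z s t)^2)^2
          + ((2:ℕ)*ξ^(2-1) * (ξ^2 + (z (s-ξ) t - z s t - e*(2*c*t))^2)
            - ξ^2 * ((2:ℕ)*ξ^(2-1) + (2:ℕ)*(z (s-ξ) t - z s t - e*(2*c*t))^(2-1)*(-G (s-ξ))))
              / (ξ^2 + (z (s-ξ) t - z s t - e*(2*c*t))^2)^2) ξ := by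
        simp only [hΦ, PhiE]
        exact hF1.add hF2
      have hderiv := hsum.deriv
      -- bounds on q1, q2, G
      have hq1b : |q1| ≤ a*|ξ| := by
        rw [hq1def, hzdiff s ξ]
        refine (abs_add_le _ _).trans ?_
        have h1 : |(-β)*ξ| = |β| * |ξ| := by rw [abs_mul, abs_neg]
        have h2 := hu1b s ξ
        rw [show -β*ξ = (-β)*ξ by ring, h1, hadef]
        nlinarith [h2, mul_nonneg (show (0:ℝ) ≤ 2*K+2*c*T by positivity)
          (show (0:ℝ) ≤ |ξ| - 1 by linarith)]
      have hq2b : |q2| ≤ a*|ξ| := by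
        rw [hq2def, ← hddef]
        refine (abs_sub _ _).trans ?_
        rw [show z (s-ξ) t - z s t = q1 from hq1def.symm]
        have h1 : |q1| ≤ (|β| + 2*K)*|ξ| := by
          rw [hq1def, hzdiff s ξ]
          refine (abs_add_le _ _).trans ?_
          have h1 : |(-β)*ξ| = |β| * |ξ| := by rw [abs_mul, abs_neg]
          have h2 := hu1b s ξ
          rw [show -β*ξ = (-β)*ξ by ring, h1]
          nlinarith
        rw [hadef]
        nlinarith [hdb, h1,
          mul_nonneg (show (0:ℝ) ≤ 2*c*T by positivity)
            (show (0:ℝ) ≤ |ξ| - 1 by linarith)]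
      have hGb' : |(-G (s-ξ))| ≤ b := by rw [abs_neg]; exact hGb (s-ξ)
      have k1 : |ξ * (2*ξ*q1*(q1 - ξ*(-G (s-ξ)))/(ξ^2+q1^2)^2)| ≤ 2*a*(a+b) :=
        key2 ξ q1 (-G (s-ξ)) a b hξ1 hq1b hGb'
      have k2 : |ξ * (2*ξ*q2*(q2 - ξ*(-G (s-ξ)))/(ξ^2+q2^2)^2)| ≤ 2*a*(a+b) :=
        key2 ξ q2 (-G (s-ξ)) a b hξ1 hq2b hGb'
      show |ξ * deriv (fun ξ' => Φ ξ' s) ξ - Φ ξ s| ≤ M2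
      rw [hderiv]
      have hre : ξ * (((2:ℕ)*ξ^(2-1) * (ξ^2 + (z (s-ξ) t - z s t)^2)
            - ξ^2 * ((2:ℕ)*ξ^(2-1) + (2:ℕ)*(z (s-ξ) t - z s t)^(2-1)*(-G (s-ξ))))
              / (ξ^2 + (z (s-ξ) t - z s t)^2)^2
          + ((2:ℕ)*ξ^(2-1) * (ξ^2 + (z (s-ξ) t - z s t - e*(2*c*t))^2)
            - ξ^2 * ((2:ℕ)*ξ^(2-1) + (2:ℕ)*(z (s-ξ) t - z s t - e*(2*c*t))^(2-1)*(-G (s-ξ))))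
              / (ξ^2 + (z (s-ξ) t - z s t - e*(2*c*t))^2)^2)
          = ξ * (2*ξ*q1*(q1 - ξ*(-G (s-ξ)))/(ξ^2+q1^2)^2)
            + ξ * (2*ξ*q2*(q2 - ξ*(-G (s-ξ)))/(ξ^2+q2^2)^2) := by
        rw [hq1def, hq2def]
        push_cast
        ring
      calc |ξ * (((2:ℕ)*ξ^(2-1) * (ξ^2 + (z (s-ξ) t - z s t)^2)
            - ξ^2 * ((2:ℕ)*ξ^(2-1) + (2:ℕ)*(z (s-ξ) t - z s t)^(2-1)*(-G (s-ξ))))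
              / (ξ^2 + (z (s-ξ) t - z s t)^2)^2
          + ((2:ℕ)*ξ^(2-1) * (ξ^2 + (z (s-ξ) t - z s t - e*(2*c*t))^2)
            - ξ^2 * ((2:ℕ)*ξ^(2-1) + (2:ℕ)*(z (s-ξ) t - z s t - e*(2*c*t))^(2-1)*(-G (s-ξ))))
              / (ξ^2 + (z (s-ξ) t - z s t - e*(2*c*t))^2)^2) - Φ ξ s|
          ≤ |ξ * (2*ξ*q1*(q1 - ξ*(-G (s-ξ)))/(ξ^2+q1^2)^2)
              + ξ * (2*ξ*q2*(q2 - ξ*(-G (s-ξ)))/(ξ^2+q2^2)^2)| + |Φ ξ s| := by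
            rw [hre]; exact abs_sub _ _
        _ ≤ M2 := by
            have := (abs_add_le (ξ * (2*ξ*q1*(q1 - ξ*(-G (s-ξ)))/(ξ^2+q1^2)^2))
              (ξ * (2*ξ*q2*(q2 - ξ*(-G (s-ξ)))/(ξ^2+q2^2)^2)))
            have hb2 := hbd ξ s
            rw [hM2def]
            linarith
    have hwn : wNorm0 Φ ≤ ENNReal.ofReal M := by
      have hS1 : (⨆ (s : ℝ) (ξ : {ξ : ℝ // |ξ| ≤ 1}), ENNReal.ofReal |Φ ξ.1 s|)
          ≤ ENNReal.ofReal 2 :=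
        iSup_le fun s => iSup_le fun ξ => ENNReal.ofReal_le_ofReal (hbd ξ.1 s)
      have hS2 : (⨆ (s : ℝ) (ξ : {ξ : ℝ // 1 < |ξ|}),
          ENNReal.ofReal (|barPhi Φ ξ.1 s| + |tildePhi Φ ξ.1 s|))
          ≤ ENNReal.ofReal (M1 + M2) :=
        iSup_le fun s => iSup_le fun ξ => ENNReal.ofReal_le_ofReal
          (add_le_add (hbar s ξ.1 ξ.2) (htilde s ξ.1 ξ.2))
      calc wNorm0 Φ ≤ ENNReal.ofReal 2 + ENNReal.ofReal (M1 + M2) := add_le_add hS1 hS2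
        _ = ENNReal.ofReal M := by
            rw [← ENNReal.ofReal_add (by norm_num) (by linarith), hMdef]
    refine ⟨⟨⟨2, hbd⟩, fun s => ⟨_, htend s⟩, hcd, lt_of_le_of_lt hwn ENNReal.ofReal_lt_top⟩, hwn⟩
  exact ⟨fun t ht e he => (main t ht e he).1, ⟨M, fun t ht e he => (main t ht e he).2⟩⟩
end
end

section
/- For any constants a ∈ ℝ and c > 0, (1/2π) PV ∫_ℝ [ (−2acξ − 2c²)/((1+a²)ξ² + 4acξ + 4c²) + (2acξ − 2c²)/((1+a²)ξ² − 4acξ + 4c²) ] dξ = −c·(1−a²)/(1+a²), the principal value taken as lim_{R→∞} ∫_{−R}^R. -/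
noncomputable section

open Real MeasureTheory Filter Topology Set
open scoped ENNReal

/-- the explicit principal value computation
`(1/2π) PV ∫ (−2acξ−2c²)/((1+a²)ξ²+4acξ+4c²) + (2acξ−2c²)/((1+a²)ξ²−4acξ+4c²) dξ
  = −c(1−a²)/(1+a²)`. -/
theorem pv_integral_computation (a c : ℝ) (hc : 0 < c) :
    Tendsto (fun R : ℝ => (1 / (2 * π)) * ∫ ξ in (-R)..R,
        ((-(2 * a * c * ξ) - 2 * c ^ 2) / ((1 + a ^ 2) * ξ ^ 2 + 4 * a * c * ξ + 4 * c ^ 2) +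
          (2 * a * c * ξ - 2 * c ^ 2) / ((1 + a ^ 2) * ξ ^ 2 - 4 * a * c * ξ + 4 * c ^ 2)))
      atTop (𝓝 (-(c * (1 - a ^ 2) / (1 + a ^ 2)))) := by
  have hA : (0:ℝ) < 1 + a ^ 2 := by positivity
  have hDp : ∀ ξ : ℝ, 0 < (1 + a ^ 2) * ξ ^ 2 + 4 * a * c * ξ + 4 * c ^ 2 := by
    intro ξ
    have h : (1 + a ^ 2) * ξ ^ 2 + 4 * a * c * ξ + 4 * c ^ 2
        = ξ ^ 2 + (a * ξ + 2 * c) ^ 2 := by ring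
    rw [h]
    rcases eq_or_ne ξ 0 with h0 | h0
    · simp [h0]; positivity
    · have h1 : 0 < ξ ^ 2 := by positivity
      nlinarith [sq_nonneg (a * ξ + 2 * c)]
  have hDm : ∀ ξ : ℝ, 0 < (1 + a ^ 2) * ξ ^ 2 - 4 * a * c * ξ + 4 * c ^ 2 := by
    intro ξ
    have h : (1 + a ^ 2) * ξ ^ 2 - 4 * a * c * ξ + 4 * c ^ 2
        = ξ ^ 2 + (a * ξ - 2 * c) ^ 2 := by ring
    rw [h]
    rcases eq_or_ne ξ 0 with h0 | h0
    · simp [h0]; positivity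
    · have h1 : 0 < ξ ^ 2 := by positivity
      nlinarith [sq_nonneg (a * ξ - 2 * c)]
  set F : ℝ → ℝ := fun ξ =>
    a * c / (1 + a ^ 2) * (Real.log ((1 + a ^ 2) * ξ ^ 2 - 4 * a * c * ξ + 4 * c ^ 2)
        - Real.log ((1 + a ^ 2) * ξ ^ 2 + 4 * a * c * ξ + 4 * c ^ 2)) +
      c * (a ^ 2 - 1) / (1 + a ^ 2) *
        (Real.arctan (((1 + a ^ 2) * ξ + 2 * a * c) / (2 * c)) +
          Real.arctan (((1 + a ^ 2) * ξ - 2 * a * c) / (2 * c))) with hF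
  have hderiv : ∀ ξ : ℝ, HasDerivAt F
      ((-(2 * a * c * ξ) - 2 * c ^ 2) / ((1 + a ^ 2) * ξ ^ 2 + 4 * a * c * ξ + 4 * c ^ 2) +
        (2 * a * c * ξ - 2 * c ^ 2) / ((1 + a ^ 2) * ξ ^ 2 - 4 * a * c * ξ + 4 * c ^ 2)) ξ := by
    intro ξ
    have hp : HasDerivAt (fun x : ℝ => (1 + a ^ 2) * x ^ 2 + 4 * a * c * x + 4 * c ^ 2)
        (2 * (1 + a ^ 2) * ξ + 4 * a * c) ξ := by
      have h := (((hasDerivAt_pow 2 ξ).const_mul (1 + a ^ 2)).add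
        ((hasDerivAt_id ξ).const_mul (4 * a * c))).add_const (4 * c ^ 2)
      refine h.congr_deriv ?_
      simp; ring
    have hm : HasDerivAt (fun x : ℝ => (1 + a ^ 2) * x ^ 2 - 4 * a * c * x + 4 * c ^ 2)
        (2 * (1 + a ^ 2) * ξ - 4 * a * c) ξ := by
      have h := (((hasDerivAt_pow 2 ξ).const_mul (1 + a ^ 2)).sub
        ((hasDerivAt_id ξ).const_mul (4 * a * c))).add_const (4 * c ^ 2)
      refine h.congr_deriv ?_
      simp; ring
    have hlogp := hp.log (hDp ξ).ne'
    have hlogm := hm.log (hDm ξ).ne'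
    have hup : HasDerivAt (fun x : ℝ => ((1 + a ^ 2) * x + 2 * a * c) / (2 * c))
        ((1 + a ^ 2) / (2 * c)) ξ := by
      have h := (((hasDerivAt_id ξ).const_mul (1 + a ^ 2)).add_const (2 * a * c)).div_const (2 * c)
      refine h.congr_deriv ?_
      simp
    have hum : HasDerivAt (fun x : ℝ => ((1 + a ^ 2) * x - 2 * a * c) / (2 * c))
        ((1 + a ^ 2) / (2 * c)) ξ := by
      have h := (((hasDerivAt_id ξ).const_mul (1 + a ^ 2)).sub_const (2 * a * c)).div_const (2 * c)
      refine h.congr_deriv ?_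
      simp
    have hap : HasDerivAt (fun x : ℝ => Real.arctan (((1 + a ^ 2) * x + 2 * a * c) / (2 * c)))
        ((1 / (1 + (((1 + a ^ 2) * ξ + 2 * a * c) / (2 * c)) ^ 2)) * ((1 + a ^ 2) / (2 * c))) ξ :=
      (Real.hasDerivAt_arctan _).comp ξ hup
    have ham : HasDerivAt (fun x : ℝ => Real.arctan (((1 + a ^ 2) * x - 2 * a * c) / (2 * c)))
        ((1 / (1 + (((1 + a ^ 2) * ξ - 2 * a * c) / (2 * c)) ^ 2)) * ((1 + a ^ 2) / (2 * c))) ξ :=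
      (Real.hasDerivAt_arctan _).comp ξ hum
    have h := ((hlogm.sub hlogp).const_mul (a * c / (1 + a ^ 2))).add
      ((hap.add ham).const_mul (c * (a ^ 2 - 1) / (1 + a ^ 2)))
    refine h.congr_deriv ?_
    have h1 : 1 + (((1 + a ^ 2) * ξ + 2 * a * c) / (2 * c)) ^ 2
        = (1 + a ^ 2) * ((1 + a ^ 2) * ξ ^ 2 + 4 * a * c * ξ + 4 * c ^ 2) / (4 * c ^ 2) := by
      field_simp
      ring
    have h2 : 1 + (((1 + a ^ 2) * ξ - 2 * a * c) / (2 * c)) ^ 2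
        = (1 + a ^ 2) * ((1 + a ^ 2) * ξ ^ 2 - 4 * a * c * ξ + 4 * c ^ 2) / (4 * c ^ 2) := by
      field_simp
      ring
    have e1 : (1 : ℝ) / ((1 + a ^ 2) * ((1 + a ^ 2) * ξ ^ 2 + 4 * a * c * ξ + 4 * c ^ 2) / (4 * c ^ 2))
        * ((1 + a ^ 2) / (2 * c)) = 2 * c / ((1 + a ^ 2) * ξ ^ 2 + 4 * a * c * ξ + 4 * c ^ 2) := by
      rw [div_div_eq_mul_div, div_mul_div_comm]
      rw [div_eq_div_iff (mul_ne_zero (mul_ne_zero hA.ne' (hDp ξ).ne')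
        (by positivity : (2 * c : ℝ) ≠ 0)) (hDp ξ).ne']
      ring
    have e2 : (1 : ℝ) / ((1 + a ^ 2) * ((1 + a ^ 2) * ξ ^ 2 - 4 * a * c * ξ + 4 * c ^ 2) / (4 * c ^ 2))
        * ((1 + a ^ 2) / (2 * c)) = 2 * c / ((1 + a ^ 2) * ξ ^ 2 - 4 * a * c * ξ + 4 * c ^ 2) := by
      rw [div_div_eq_mul_div, div_mul_div_comm]
      rw [div_eq_div_iff (mul_ne_zero (mul_ne_zero hA.ne' (hDm ξ).ne')
        (by positivity : (2 * c : ℝ) ≠ 0)) (hDm ξ).ne']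
      ring
    rw [h1, h2, e1, e2]
    have key : ∀ u v : ℝ, u ≠ 0 → v ≠ 0 →
        a * c / (1 + a ^ 2) * ((2 * (1 + a ^ 2) * ξ - 4 * a * c) / v
            - (2 * (1 + a ^ 2) * ξ + 4 * a * c) / u)
          + c * (a ^ 2 - 1) / (1 + a ^ 2) * (2 * c / u + 2 * c / v)
        = (-(2 * a * c * ξ) - 2 * c ^ 2) / u + (2 * a * c * ξ - 2 * c ^ 2) / v := by
      intro u v hu hv
      field_simp
      ring
    exact (key _ _ (hDp ξ).ne' (hDm ξ).ne')
  have hcont : Continuous (fun ξ : ℝ =>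
      (-(2 * a * c * ξ) - 2 * c ^ 2) / ((1 + a ^ 2) * ξ ^ 2 + 4 * a * c * ξ + 4 * c ^ 2) +
        (2 * a * c * ξ - 2 * c ^ 2) / ((1 + a ^ 2) * ξ ^ 2 - 4 * a * c * ξ + 4 * c ^ 2)) := by
    apply Continuous.add
    · exact Continuous.div (by fun_prop) (by fun_prop) fun ξ => (hDp ξ).ne'
    · exact Continuous.div (by fun_prop) (by fun_prop) fun ξ => (hDm ξ).ne'
  have hint : ∀ R : ℝ, (∫ ξ in (-R)..R,
      ((-(2 * a * c * ξ) - 2 * c ^ 2) / ((1 + a ^ 2) * ξ ^ 2 + 4 * a * c * ξ + 4 * c ^ 2) +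
        (2 * a * c * ξ - 2 * c ^ 2) / ((1 + a ^ 2) * ξ ^ 2 - 4 * a * c * ξ + 4 * c ^ 2)))
      = F R - F (-R) := by
    intro R
    exact intervalIntegral.integral_eq_sub_of_hasDerivAt (fun x _ => hderiv x)
      (hcont.intervalIntegrable _ _)
  -- log part tends to 0
  have h1 : Tendsto (fun R : ℝ => 4 * a * c / R) atTop (𝓝 0) :=
    tendsto_const_nhds.div_atTop tendsto_id
  have h2 : Tendsto (fun R : ℝ => 4 * c ^ 2 / R ^ 2) atTop (𝓝 0) :=
    tendsto_const_nhds.div_atTop (tendsto_pow_atTop two_ne_zero)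
  have hratio : Tendsto (fun R : ℝ =>
      ((1 + a ^ 2) * R ^ 2 - 4 * a * c * R + 4 * c ^ 2) /
        ((1 + a ^ 2) * R ^ 2 + 4 * a * c * R + 4 * c ^ 2)) atTop (𝓝 1) := by
    have h3 : Tendsto (fun R : ℝ =>
        ((1 + a ^ 2) - 4 * a * c / R + 4 * c ^ 2 / R ^ 2) /
          ((1 + a ^ 2) + 4 * a * c / R + 4 * c ^ 2 / R ^ 2)) atTop
        (𝓝 (((1 + a ^ 2) - 0 + 0) / ((1 + a ^ 2) + 0 + 0))) :=
      ((tendsto_const_nhds.sub h1).add h2).div ((tendsto_const_nhds.add h1).add h2)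
        (by simpa using hA.ne')
    have h4 : ((1 + a ^ 2) - 0 + 0 : ℝ) / ((1 + a ^ 2) + 0 + 0) = 1 := by
      field_simp
      ring
    rw [h4] at h3
    apply h3.congr'
    filter_upwards [eventually_gt_atTop (0 : ℝ)] with R hR
    have hR2 : (0 : ℝ) < R ^ 2 := by positivity
    have hden : (0 : ℝ) < (1 + a ^ 2) + 4 * a * c / R + 4 * c ^ 2 / R ^ 2 := by
      have he : (1 + a ^ 2) + 4 * a * c / R + 4 * c ^ 2 / R ^ 2
          = ((1 + a ^ 2) * R ^ 2 + 4 * a * c * R + 4 * c ^ 2) / R ^ 2 := by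
        field_simp
      rw [he]
      exact div_pos (hDp R) hR2
    rw [div_eq_div_iff hden.ne' (hDp R).ne']
    field_simp
  have hlog : Tendsto (fun R : ℝ =>
      Real.log ((1 + a ^ 2) * R ^ 2 - 4 * a * c * R + 4 * c ^ 2) -
        Real.log ((1 + a ^ 2) * R ^ 2 + 4 * a * c * R + 4 * c ^ 2)) atTop (𝓝 0) := by
    have h5 := (Real.continuousAt_log one_ne_zero).tendsto.comp hratio
    rw [Real.log_one] at h5
    exact h5.congr fun R => Real.log_div (hDm R).ne' (hDp R).ne'
  have hlogneg : Tendsto (fun R : ℝ =>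
      Real.log ((1 + a ^ 2) * (-R) ^ 2 - 4 * a * c * (-R) + 4 * c ^ 2) -
        Real.log ((1 + a ^ 2) * (-R) ^ 2 + 4 * a * c * (-R) + 4 * c ^ 2)) atTop (𝓝 0) := by
    have h6 := hlog.neg
    rw [neg_zero] at h6
    refine h6.congr fun R => ?_
    have e1 : (1 + a ^ 2) * (-R) ^ 2 - 4 * a * c * (-R) + 4 * c ^ 2
        = (1 + a ^ 2) * R ^ 2 + 4 * a * c * R + 4 * c ^ 2 := by ring
    have e2 : (1 + a ^ 2) * (-R) ^ 2 + 4 * a * c * (-R) + 4 * c ^ 2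
        = (1 + a ^ 2) * R ^ 2 - 4 * a * c * R + 4 * c ^ 2 := by ring
    rw [e1, e2]
    ring
  -- arctan limits
  have hlin : Tendsto (fun R : ℝ => (1 + a ^ 2) * R) atTop atTop :=
    (tendsto_id (α := ℝ)).const_mul_atTop hA
  have hlinneg : Tendsto (fun R : ℝ => (1 + a ^ 2) * (-R)) atTop atBot := by
    refine (tendsto_neg_atTop_atBot.comp hlin).congr fun R => ?_
    simp [mul_neg]
  have harg1 : Tendsto (fun R : ℝ => ((1 + a ^ 2) * R + 2 * a * c) / (2 * c)) atTop atTop :=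
    (tendsto_atTop_add_const_right _ _ hlin).atTop_div_const (by positivity)
  have harg2 : Tendsto (fun R : ℝ => ((1 + a ^ 2) * R - 2 * a * c) / (2 * c)) atTop atTop :=
    (tendsto_atTop_add_const_right _ _ hlin).atTop_div_const (by positivity)
  have harg3 : Tendsto (fun R : ℝ => ((1 + a ^ 2) * (-R) + 2 * a * c) / (2 * c)) atTop atBot :=
    (tendsto_atBot_add_const_right _ _ hlinneg).atBot_div_const (by positivity)
  have harg4 : Tendsto (fun R : ℝ => ((1 + a ^ 2) * (-R) - 2 * a * c) / (2 * c)) atTop atBot :=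
    (tendsto_atBot_add_const_right _ _ hlinneg).atBot_div_const (by positivity)
  have hat1 : Tendsto (fun R : ℝ => Real.arctan (((1 + a ^ 2) * R + 2 * a * c) / (2 * c)))
      atTop (𝓝 (π / 2)) :=
    (Real.tendsto_arctan_atTop.mono_right nhdsWithin_le_nhds).comp harg1
  have hat2 : Tendsto (fun R : ℝ => Real.arctan (((1 + a ^ 2) * R - 2 * a * c) / (2 * c)))
      atTop (𝓝 (π / 2)) :=
    (Real.tendsto_arctan_atTop.mono_right nhdsWithin_le_nhds).comp harg2
  have hat3 : Tendsto (fun R : ℝ => Real.arctan (((1 + a ^ 2) * (-R) + 2 * a * c) / (2 * c)))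
      atTop (𝓝 (-(π / 2))) :=
    (Real.tendsto_arctan_atBot.mono_right nhdsWithin_le_nhds).comp harg3
  have hat4 : Tendsto (fun R : ℝ => Real.arctan (((1 + a ^ 2) * (-R) - 2 * a * c) / (2 * c)))
      atTop (𝓝 (-(π / 2))) :=
    (Real.tendsto_arctan_atBot.mono_right nhdsWithin_le_nhds).comp harg4
  have hG : Tendsto (fun R : ℝ => F R - F (-R)) atTop
      (𝓝 ((a * c / (1 + a ^ 2) * 0 + c * (a ^ 2 - 1) / (1 + a ^ 2) * (π / 2 + π / 2)) -
        (a * c / (1 + a ^ 2) * 0 + c * (a ^ 2 - 1) / (1 + a ^ 2) * (-(π / 2) + -(π / 2))))) :=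
    ((hlog.const_mul _).add ((hat1.add hat2).const_mul _)).sub
      ((hlogneg.const_mul _).add ((hat3.add hat4).const_mul _))
  have hfinal : Tendsto (fun R : ℝ => (1 / (2 * π)) * (F R - F (-R))) atTop
      (𝓝 (-(c * (1 - a ^ 2) / (1 + a ^ 2)))) := by
    have h7 := hG.const_mul (1 / (2 * π))
    convert h7 using 2
    have hπ : π ≠ 0 := Real.pi_ne_zero
    field_simp
    ring
  exact hfinal.congr fun R => by rw [hint R]
end
end

section
/- Let z(s,t) be a curve with ‖∂_s z(·,t)‖_{L^∞} ≤ M for all t, and let c > 0. Define Ψ_t(ξ,s) := Δ_sing Φ(tξ,s,t) = −4c²(4c² + (1−3Z_t²)ξ²) / ((1+Z₀²)(ξ²+(Z_tξ+2c)²)(ξ²+(Z_tξ−2c)²)), where Z_t and Z₀ are evaluated at (tξ,s). Then there is a constant C depending only on M and c such that |Ψ_t(ξ,s)| ≤ C/(1+ξ²) for all ξ, s ∈ ℝ and t > 0. In particular this uses the lower bound ξ² + (Zξ ± 2c)² ≥ 4c²/(1+Z²), valid for all ξ, Z ∈ ℝ. -/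
noncomputable section

open Real MeasureTheory Filter Topology Set
open scoped ENNReal

set_option maxHeartbeats 1600000 in
private theorem rescaled_singular_weight_bound_aux
    (z : ℝ → ℝ → ℝ) (M c : ℝ) (hc : 0 < c)
    (hdiff : ∀ t : ℝ, Differentiable ℝ fun s => z s t)
    (hM : ∀ t s : ℝ, |deriv (fun s' => z s' t) s| ≤ M) :
    (∀ ξ Z : ℝ, 4 * c ^ 2 / (1 + Z ^ 2) ≤ ξ ^ 2 + (Z * ξ + 2 * c) ^ 2 ∧
        4 * c ^ 2 / (1 + Z ^ 2) ≤ ξ ^ 2 + (Z * ξ - 2 * c) ^ 2) ∧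
    ∃ C : ℝ, 0 < C ∧ ∀ t, 0 < t → ∀ ξ s : ℝ,
      |(-(4 * c ^ 2) * (4 * c ^ 2 + (1 - 3 * (Zfun z t (t * ξ) s) ^ 2) * ξ ^ 2)) /
          ((1 + (Zfun z 0 (t * ξ) s) ^ 2) *
            (ξ ^ 2 + (Zfun z t (t * ξ) s * ξ + 2 * c) ^ 2) *
            (ξ ^ 2 + (Zfun z t (t * ξ) s * ξ - 2 * c) ^ 2))| ≤ C / (1 + ξ ^ 2) := by
  have key : ∀ ξ Z : ℝ, 4 * c ^ 2 / (1 + Z ^ 2) ≤ ξ ^ 2 + (Z * ξ + 2 * c) ^ 2 ∧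
      4 * c ^ 2 / (1 + Z ^ 2) ≤ ξ ^ 2 + (Z * ξ - 2 * c) ^ 2 := by
    intro ξ Z
    have h1 : (0:ℝ) < 1 + Z ^ 2 := by positivity
    constructor
    · rw [div_le_iff₀ h1]
      nlinarith [sq_nonneg (ξ + Z * (Z * ξ + 2 * c))]
    · rw [div_le_iff₀ h1]
      nlinarith [sq_nonneg (ξ + Z * (Z * ξ - 2 * c))]
  refine ⟨key, ?_⟩
  have hM0 : 0 ≤ M := (abs_nonneg _).trans (hM 0 0)
  -- Lipschitz bound on difference quotients
  have hZb : ∀ t ξ s : ℝ, |Zfun z t ξ s| ≤ M := by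
    intro t ξ s
    rcases eq_or_ne ξ 0 with h | h
    · simp [Zfun, Zof, h, hM0]
    · have hlip := convex_univ.norm_image_sub_le_of_norm_deriv_le (s := (univ : Set ℝ))
        (f := fun s' => z s' t) (fun x _ => (hdiff t).differentiableAt)
        (fun x _ => hM t x) (mem_univ (s - ξ)) (mem_univ s)
      have h2 : |z s t - z (s - ξ) t| ≤ M * |ξ| := by
        simpa using hlip
      rw [Zfun, Zof, abs_div, div_le_iff₀ (abs_pos.mpr h)]
      simpa using h2
  set κ : ℝ := 4 * c ^ 2 / (1 + M ^ 2) with hκdef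
  have hκpos : 0 < κ := by positivity
  have hκval : κ * (1 + M ^ 2) = 4 * c ^ 2 := by
    rw [hκdef]; exact div_mul_cancel₀ _ (by positivity)
  set m : ℝ := min 1 κ with hmdef
  have hmpos : 0 < m := lt_min one_pos hκpos
  have hm_le1 : m ≤ 1 := min_le_left _ _
  have hmκ : m ≤ κ := min_le_right _ _
  set K : ℝ := max (4 * c ^ 2) (1 + 3 * M ^ 2) with hKdef
  have hK1 : 4 * c ^ 2 ≤ K := le_max_left _ _
  have hK2 : 1 + 3 * M ^ 2 ≤ K := le_max_right _ _
  have hKpos : 0 < K := lt_of_lt_of_le (by positivity) hK1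
  set C : ℝ := 16 * c ^ 2 * K / m ^ 2 with hCdef
  have hCpos : 0 < C := div_pos (by positivity) (by positivity)
  have hCm : C * m ^ 2 = 16 * c ^ 2 * K := by
    rw [hCdef]; exact div_mul_cancel₀ _ (pow_pos hmpos 2).ne'
  clear_value κ m K C
  refine ⟨C, hCpos, ?_⟩
  intro t ht ξ s
  set Z : ℝ := Zfun z t (t * ξ) s with hZdef
  set Z0 : ℝ := Zfun z 0 (t * ξ) s with hZ0def
  have hZsq : Z ^ 2 ≤ M ^ 2 := by
    have h := hZb t (t * ξ) s
    rw [← hZdef] at h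
    nlinarith [abs_nonneg Z, sq_abs Z]
  set A : ℝ := ξ ^ 2 + (Z * ξ + 2 * c) ^ 2 with hAdef
  set B : ℝ := ξ ^ 2 + (Z * ξ - 2 * c) ^ 2 with hBdef
  have hκZ : κ ≤ 4 * c ^ 2 / (1 + Z ^ 2) := by
    rw [hκdef]
    exact div_le_div_of_nonneg_left (by positivity) (by positivity) (by linarith)
  have hκA : κ ≤ A := hκZ.trans (key ξ Z).1
  have hκB : κ ≤ B := hκZ.trans (key ξ Z).2
  have hξA : ξ ^ 2 ≤ A := by rw [hAdef]; nlinarith [sq_nonneg (Z * ξ + 2 * c)]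
  have hξB : ξ ^ 2 ≤ B := by rw [hBdef]; nlinarith [sq_nonneg (Z * ξ - 2 * c)]
  have hZ0nn : 0 ≤ Z0 ^ 2 := sq_nonneg _
  clear_value Z Z0 A B
  clear hZb key hdiff hM hZdef hZ0def hAdef hBdef hκdef hmdef hKdef hCdef z
  have hApos : 0 < A := hκpos.trans_le hκA
  have hBpos : 0 < B := hκpos.trans_le hκB
  have hDpos : 0 < (1 + Z0 ^ 2) * A * B := by positivity
  have hm1 : m * (1 + ξ ^ 2) ≤ 2 * A := by
    have h1 : m * ξ ^ 2 ≤ 1 * ξ ^ 2 := mul_le_mul_of_nonneg_right hm_le1 (sq_nonneg ξ)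
    nlinarith [h1, hmκ, hκA, hξA]
  have hm2 : m * (1 + ξ ^ 2) ≤ 2 * B := by
    have h1 : m * ξ ^ 2 ≤ 1 * ξ ^ 2 := mul_le_mul_of_nonneg_right hm_le1 (sq_nonneg ξ)
    nlinarith [h1, hmκ, hκB, hξB]
  have hmnn : 0 ≤ m * (1 + ξ ^ 2) := by positivity
  have hAB2 : (m * (1 + ξ ^ 2)) ^ 2 ≤ 4 * (A * B) := by
    nlinarith [mul_le_mul hm1 hm2 hmnn (by linarith : (0:ℝ) ≤ 2 * A)]
  have habs : |4 * c ^ 2 + (1 - 3 * Z ^ 2) * ξ ^ 2| ≤ K * (1 + ξ ^ 2) := by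
    have hK1' : (1:ℝ) ≤ K := by nlinarith [sq_nonneg M]
    have e1 : 1 * ξ ^ 2 ≤ K * ξ ^ 2 := mul_le_mul_of_nonneg_right hK1' (sq_nonneg ξ)
    have e2 : Z ^ 2 * ξ ^ 2 ≤ M ^ 2 * ξ ^ 2 :=
      mul_le_mul_of_nonneg_right hZsq (sq_nonneg ξ)
    have e3 : (1 + 3 * M ^ 2) * ξ ^ 2 ≤ K * ξ ^ 2 :=
      mul_le_mul_of_nonneg_right hK2 (sq_nonneg ξ)
    have e4 : (0:ℝ) ≤ Z ^ 2 * ξ ^ 2 := mul_nonneg (sq_nonneg Z) (sq_nonneg ξ)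
    rw [abs_le]
    constructor
    · nlinarith [e2, e3, sq_nonneg ξ, sq_nonneg c]
    · nlinarith [e1, e4, hK1]
  have hNum : |(-(4 * c ^ 2) * (4 * c ^ 2 + (1 - 3 * Z ^ 2) * ξ ^ 2))| ≤
      4 * c ^ 2 * K * (1 + ξ ^ 2) := by
    rw [abs_mul, abs_neg, abs_of_nonneg (by positivity : (0:ℝ) ≤ 4 * c ^ 2)]
    calc 4 * c ^ 2 * |4 * c ^ 2 + (1 - 3 * Z ^ 2) * ξ ^ 2|
        ≤ 4 * c ^ 2 * (K * (1 + ξ ^ 2)) :=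
          mul_le_mul_of_nonneg_left habs (by positivity)
      _ = 4 * c ^ 2 * K * (1 + ξ ^ 2) := by ring
  rw [abs_div, abs_of_pos hDpos, div_le_div_iff₀ hDpos (by positivity : (0:ℝ) < 1 + ξ ^ 2)]
  have step1 : |(-(4 * c ^ 2) * (4 * c ^ 2 + (1 - 3 * Z ^ 2) * ξ ^ 2))| * (1 + ξ ^ 2) ≤
      4 * c ^ 2 * K * (1 + ξ ^ 2) * (1 + ξ ^ 2) :=
    mul_le_mul_of_nonneg_right hNum (by positivity)
  have step2 : 4 * c ^ 2 * K * (1 + ξ ^ 2) * (1 + ξ ^ 2) ≤ C * (A * B) := by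
    have h := mul_le_mul_of_nonneg_left hAB2 hCpos.le
    have h2 : C * (m * (1 + ξ ^ 2)) ^ 2 = 16 * c ^ 2 * K * (1 + ξ ^ 2) ^ 2 := by
      calc C * (m * (1 + ξ ^ 2)) ^ 2 = C * m ^ 2 * (1 + ξ ^ 2) ^ 2 := by ring
        _ = 16 * c ^ 2 * K * (1 + ξ ^ 2) ^ 2 := by rw [hCm]
    have h3 : C * (4 * (A * B)) = 4 * (C * (A * B)) := by ring
    have h4 : 4 * c ^ 2 * K * (1 + ξ ^ 2) * (1 + ξ ^ 2) * 4 =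
        16 * c ^ 2 * K * (1 + ξ ^ 2) ^ 2 := by ring
    linarith
  have step3 : C * (A * B) ≤ C * ((1 + Z0 ^ 2) * A * B) := by
    have h1 : A * B ≤ (1 + Z0 ^ 2) * (A * B) :=
      le_mul_of_one_le_left (mul_nonneg hApos.le hBpos.le) (by linarith)
    calc C * (A * B) ≤ C * ((1 + Z0 ^ 2) * (A * B)) :=
          mul_le_mul_of_nonneg_left h1 hCpos.le
      _ = C * ((1 + Z0 ^ 2) * A * B) := by ring
  calc |(-(4 * c ^ 2) * (4 * c ^ 2 + (1 - 3 * Z ^ 2) * ξ ^ 2))| * (1 + ξ ^ 2)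
      ≤ 4 * c ^ 2 * K * (1 + ξ ^ 2) * (1 + ξ ^ 2) := step1
    _ ≤ C * (A * B) := step2
    _ ≤ C * ((1 + Z0 ^ 2) * A * B) := step3

/-- the uniform bound `|Ψ_t(ξ,s)| ≤ C/(1+ξ²)` for the rescaled singular
weight `Ψ_t(ξ,s) = Δ_sing Φ(tξ,s,t)`, together with the elementary lower bound
`ξ² + (Zξ ± 2c)² ≥ 4c²/(1+Z²)`. -/
theorem rescaled_singular_weight_bound
    (z : ℝ → ℝ → ℝ) (M c : ℝ) (hc : 0 < c)
    (hdiff : ∀ t : ℝ, Differentiable ℝ fun s => z s t)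
    (hM : ∀ t s : ℝ, |deriv (fun s' => z s' t) s| ≤ M) :
    (∀ ξ Z : ℝ, 4 * c ^ 2 / (1 + Z ^ 2) ≤ ξ ^ 2 + (Z * ξ + 2 * c) ^ 2 ∧
        4 * c ^ 2 / (1 + Z ^ 2) ≤ ξ ^ 2 + (Z * ξ - 2 * c) ^ 2) ∧
    ∃ C : ℝ, 0 < C ∧ ∀ t, 0 < t → ∀ ξ s : ℝ,
      |(-(4 * c ^ 2) * (4 * c ^ 2 + (1 - 3 * (Zfun z t (t * ξ) s) ^ 2) * ξ ^ 2)) /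
          ((1 + (Zfun z 0 (t * ξ) s) ^ 2) *
            (ξ ^ 2 + (Zfun z t (t * ξ) s * ξ + 2 * c) ^ 2) *
            (ξ ^ 2 + (Zfun z t (t * ξ) s * ξ - 2 * c) ^ 2))| ≤ C / (1 + ξ ^ 2) := by
  exact rescaled_singular_weight_bound_aux z M c hc hdiff hM
end
end
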